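/- arXiv:2508.13449 — 3 statements merged into one kernel-verified Lean document; each statement's English description precedes it below -/
import Mathlib

section
/- For real b > 0 and real x > 0, ∫_0^∞ y^{-1/2} · e^{-x²/(4y)} · e^{-b y} dy = √(π/b) · e^{-x √b}. -/
open MeasureTheory Real

-- derivative helper
lemma phi_hasDeriv (s c u : ℝ) (hu : 0 < u) :
    HasDerivAt (fun u : ℝ => s * u - c / u) (s + c / u ^ 2) u := by
  have h1 : HasDerivAt (fun u : ℝ => s * u) s u := by
    simpa using (hasDerivAt_id u).const_mul s
  have h2 : HasDerivAt (fun u : ℝ => c / u) (-(c / u ^ 2)) u := by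
    have := (hasDerivAt_inv (ne_of_gt hu)).const_mul c
    simpa [div_eq_mul_inv, mul_comm, neg_div] using this
  have h3 := h1.sub h2
  rw [sub_neg_eq_add] at h3
  exact h3

lemma glasser_half (s c : ℝ) (hs : 0 < s) (hc : 0 < c) :
    ∫ u in Set.Ioi (0 : ℝ), Real.exp (-(s * u - c / u) ^ 2) =
      Real.sqrt π / (2 * s) := by
  set φ : ℝ → ℝ := fun u => s * u - c / u with hφ
  have hderiv : ∀ u ∈ Set.Ioi (0 : ℝ),
      HasDerivWithinAt φ (s + c / u ^ 2) (Set.Ioi 0) u := fun u hu =>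
    (phi_hasDeriv s c u hu).hasDerivWithinAt
  have hcont : ContinuousOn φ (Set.Ioi 0) := fun u hu =>
    ((hderiv u hu).differentiableWithinAt).continuousWithinAt
  have hmono : StrictMonoOn φ (Set.Ioi 0) := by
    apply strictMonoOn_of_deriv_pos (convex_Ioi 0) hcont
    intro u hu
    rw [interior_Ioi] at hu
    rw [(phi_hasDeriv s c u hu).deriv]
    positivity
  have hinj : Set.InjOn φ (Set.Ioi 0) := hmono.injOn
  have himg : φ '' Set.Ioi 0 = Set.univ := by
    apply Set.eq_univ_of_forall
    intro t
    set r : ℝ := Real.sqrt (t ^ 2 + 4 * s * c) with hr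
    have hr2 : r ^ 2 = t ^ 2 + 4 * s * c := by
      rw [hr, sq_sqrt]; nlinarith
    have hrt : |t| < r := by
      rw [hr, ← Real.sqrt_sq_eq_abs]
      apply Real.sqrt_lt_sqrt (sq_nonneg t)
      nlinarith
    set w : ℝ := (t + r) / (2 * s) with hw
    have hwpos : 0 < w := by
      apply div_pos _ (by linarith)
      have := neg_abs_le t
      linarith
    refine ⟨w, hwpos, ?_⟩
    have key : s * w ^ 2 - t * w - c = 0 := by
      rw [hw]; field_simp; nlinarith
    show s * w - c / w = t
    field_simp
    nlinarith
  have hmeas : MeasurableSet (Set.Ioi (0 : ℝ)) := measurableSet_Ioi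
  -- Step A: ∫ℝ e^{-t²} = ∫ Ioi0 (s + c/u²) e^{-(φ u)²}
  have hA : ∫ t : ℝ, Real.exp (-t ^ 2) =
      ∫ u in Set.Ioi (0 : ℝ), (s + c / u ^ 2) * Real.exp (-(s * u - c / u) ^ 2) := by
    have := MeasureTheory.integral_image_eq_integral_abs_deriv_smul hmeas hderiv hinj
      (fun t => Real.exp (-t ^ 2))
    rw [himg] at this
    simp only [Measure.restrict_univ] at this
    rw [this]
    apply setIntegral_congr_fun hmeas
    intro u hu
    have hu' : (0 : ℝ) < u := hu
    have : |s + c / u ^ 2| = s + c / u ^ 2 := abs_of_pos (by positivity)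
    simp [this, smul_eq_mul]
    left; rfl
  -- integrability of the pure exponential
  have hInt1 : IntegrableOn (fun u => Real.exp (-(s * u - c / u) ^ 2)) (Set.Ioi 0) := by
    have hb : Integrable (fun u : ℝ => Real.exp (2 * s * c) * Real.exp (-s^2 * u ^ 2)) := by
      exact (integrable_exp_neg_mul_sq (by positivity)).const_mul _
    apply ((hb.restrict (s := Set.Ioi 0))).mono
    · apply ContinuousOn.aestronglyMeasurable _ hmeas
      apply ContinuousOn.rexp
      apply ContinuousOn.neg
      apply ContinuousOn.pow
      apply ContinuousOn.sub (continuousOn_const.mul continuousOn_id)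
      exact continuousOn_const.div continuousOn_id (fun u hu => ne_of_gt hu)
    · filter_upwards [ae_restrict_mem hmeas] with u hu
      have hu' : (0 : ℝ) < u := hu
      rw [Real.norm_eq_abs, Real.abs_exp, Real.norm_eq_abs]
      rw [abs_of_pos (by positivity)]
      rw [← Real.exp_add]
      apply Real.exp_le_exp.2
      have h1 : (s * u - c / u) ^ 2 = s^2 * u ^ 2 - 2 * s * c + c ^ 2 / u ^ 2 := by
        field_simp; ring
      have h2 : 0 ≤ c ^ 2 / u ^ 2 := by positivity
      nlinarith
  -- symmetry substitution ψ v = c / (s v)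
  set ψ : ℝ → ℝ := fun v => c / (s * v) with hψ
  have hψderiv : ∀ v ∈ Set.Ioi (0 : ℝ),
      HasDerivWithinAt ψ (-(c / (s * v ^ 2))) (Set.Ioi 0) v := by
    intro v hv
    have hv' : (0 : ℝ) < v := hv
    have := ((hasDerivAt_inv (ne_of_gt hv')).const_mul (c / s))
    have heq : (fun v : ℝ => c / s * v⁻¹) = ψ := by
      funext u; rw [hψ]; field_simp
    rw [heq] at this
    have : HasDerivAt ψ (-(c / (s * v ^ 2))) v := by
      convert this using 1
      · rfl
      · rfl
      · ring
    exact this.hasDerivWithinAt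
  have hψinj : Set.InjOn ψ (Set.Ioi 0) := by
    intro u hu v hv h
    have hu' : (0 : ℝ) < u := hu
    have hv' : (0 : ℝ) < v := hv
    rw [hψ] at h
    field_simp at h
    exact h.symm
  have hψimg : ψ '' Set.Ioi 0 = Set.Ioi 0 := by
    apply Set.Subset.antisymm
    · rintro _ ⟨v, hv, rfl⟩
      have hv' : (0 : ℝ) < v := hv
      show (0:ℝ) < c / (s * v)
      positivity
    · intro u hu
      have hu' : (0 : ℝ) < u := hu
      refine ⟨c / (s * u), by show (0:ℝ) < c / (s*u); positivity, ?_⟩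
      show c / (s * (c / (s * u))) = u
      field_simp
  -- equality of the two pieces
  have hB : ∫ u in Set.Ioi (0 : ℝ), (c / u ^ 2) * Real.exp (-(s * u - c / u) ^ 2) =
      ∫ v in Set.Ioi (0 : ℝ), s * Real.exp (-(s * v - c / v) ^ 2) := by
    have := MeasureTheory.integral_image_eq_integral_abs_deriv_smul hmeas hψderiv hψinj
      (fun u => (c / u ^ 2) * Real.exp (-(s * u - c / u) ^ 2))
    rw [hψimg] at this
    rw [this]
    apply setIntegral_congr_fun hmeas
    intro v hv
    have hv' : (0 : ℝ) < v := hv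
    have habs : |(-(c / (s * v ^ 2)))| = c / (s * v ^ 2) := by
      rw [abs_neg]; exact abs_of_pos (by positivity)
    have hψv : ψ v = c / (s * v) := rfl
    have harg : s * ψ v - c / ψ v = -(s * v - c / v) := by
      rw [hψv]; field_simp; ring
    have hsq : (s * ψ v - c / ψ v) ^ 2 = (s * v - c / v) ^ 2 := by rw [harg, neg_sq]
    have hcoef : c / (ψ v) ^ 2 = s ^ 2 * v ^ 2 / c := by
      rw [hψv]; field_simp
    simp only [smul_eq_mul, habs, hsq, hcoef]
    field_simp
  -- integrability of second piece
  have hInt2 : IntegrableOn (fun u => (c / u ^ 2) * Real.exp (-(s * u - c / u) ^ 2))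
      (Set.Ioi 0) := by
    have hiff := MeasureTheory.integrableOn_image_iff_integrableOn_abs_deriv_smul hmeas
      hψderiv hψinj (fun u => (c / u ^ 2) * Real.exp (-(s * u - c / u) ^ 2))
    rw [hψimg] at hiff
    rw [hiff]
    apply MeasureTheory.IntegrableOn.congr_fun (hInt1.const_mul s) _ hmeas
    intro v hv
    have hv' : (0 : ℝ) < v := hv
    have habs : |(-(c / (s * v ^ 2)))| = c / (s * v ^ 2) := by
      rw [abs_neg]; exact abs_of_pos (by positivity)
    have hψv : ψ v = c / (s * v) := rfl
    have harg : s * ψ v - c / ψ v = -(s * v - c / v) := by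
      rw [hψv]; field_simp; ring
    have hsq : (s * ψ v - c / ψ v) ^ 2 = (s * v - c / v) ^ 2 := by rw [harg, neg_sq]
    have hcoef : c / (ψ v) ^ 2 = s ^ 2 * v ^ 2 / c := by
      rw [hψv]; field_simp
    simp only [smul_eq_mul, habs, hsq, hcoef]
    field_simp
  -- put it together
  have hgauss : ∫ t : ℝ, Real.exp (-t ^ 2) = Real.sqrt π := by
    have := integral_gaussian 1
    simpa using this
  have hsplit : ∫ u in Set.Ioi (0 : ℝ), (s + c / u ^ 2) * Real.exp (-(s * u - c / u) ^ 2)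
      = (∫ u in Set.Ioi (0 : ℝ), s * Real.exp (-(s * u - c / u) ^ 2))
      + ∫ u in Set.Ioi (0 : ℝ), (c / u ^ 2) * Real.exp (-(s * u - c / u) ^ 2) := by
    rw [← integral_add (hInt1.const_mul s) hInt2]
    congr 1; funext u; ring
  have hfinal : Real.sqrt π = 2 * s * ∫ u in Set.Ioi (0 : ℝ),
      Real.exp (-(s * u - c / u) ^ 2) := by
    rw [← hgauss, hA, hsplit, hB, integral_const_mul]
    ring
  rw [eq_div_iff (by positivity : (2 : ℝ) * s ≠ 0)]
  rw [hfinal]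
  ring

theorem gaussian_subordination (b x : ℝ) (hb : 0 < b) (hx : 0 < x) :
    ∫ y in Set.Ioi (0 : ℝ), y ^ (-(1 : ℝ) / 2) * Real.exp (-x ^ 2 / (4 * y)) * Real.exp (-b * y) =
      Real.sqrt (π / b) * Real.exp (-x * Real.sqrt b) := by
  have hmeas : MeasurableSet (Set.Ioi (0 : ℝ)) := measurableSet_Ioi
  set s : ℝ := Real.sqrt b with hsdef
  have hs : 0 < s := Real.sqrt_pos.2 hb
  have hs2 : s ^ 2 = b := Real.sq_sqrt hb.le
  -- substitution y = u^2
  have hderiv : ∀ u ∈ Set.Ioi (0 : ℝ),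
      HasDerivWithinAt (fun u : ℝ => u ^ 2) (2 * u) (Set.Ioi 0) u := by
    intro u hu
    simpa [mul_comm] using ((hasDerivAt_pow 2 u).hasDerivWithinAt)
  have hinj : Set.InjOn (fun u : ℝ => u ^ 2) (Set.Ioi 0) := by
    intro u hu v hv h
    have hu' : (0 : ℝ) < u := hu
    have hv' : (0 : ℝ) < v := hv
    have h' : u ^ 2 = v ^ 2 := h
    have h2 : (u - v) * (u + v) = 0 := by linear_combination h'
    rcases mul_eq_zero.1 h2 with h3 | h3
    · linarith
    · linarith
  have himg : (fun u : ℝ => u ^ 2) '' Set.Ioi 0 = Set.Ioi 0 := by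
    apply Set.Subset.antisymm
    · rintro _ ⟨u, hu, rfl⟩
      have hu' : (0 : ℝ) < u := hu
      exact pow_pos hu' 2
    · intro y hy
      have hy' : (0 : ℝ) < y := hy
      exact ⟨Real.sqrt y, Real.sqrt_pos.2 hy', Real.sq_sqrt hy'.le⟩
  have hsub := MeasureTheory.integral_image_eq_integral_abs_deriv_smul hmeas hderiv hinj
    (fun y => y ^ (-(1 : ℝ) / 2) * Real.exp (-x ^ 2 / (4 * y)) * Real.exp (-b * y))
  rw [himg] at hsub
  rw [hsub]
  have hpt : Set.EqOn
      (fun u : ℝ => |2 * u| • ((u ^ 2 : ℝ) ^ (-(1 : ℝ) / 2) *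
        Real.exp (-x ^ 2 / (4 * u ^ 2)) * Real.exp (-b * u ^ 2)))
      (fun u : ℝ => 2 * Real.exp (-x * s) * Real.exp (-(s * u - (x / 2) / u) ^ 2))
      (Set.Ioi 0) := by
    intro u hu
    have hu' : (0 : ℝ) < u := hu
    have habs : |2 * u| = 2 * u := abs_of_pos (by linarith)
    have hrpow : (u ^ 2 : ℝ) ^ (-(1 : ℝ) / 2) = u⁻¹ := by
      have h1 : -(1 : ℝ) / 2 = -(1 / 2) := by norm_num
      rw [h1, Real.rpow_neg (by positivity), ← Real.sqrt_eq_rpow, Real.sqrt_sq hu'.le]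
    have hne : u ≠ 0 := ne_of_gt hu'
    have hhalf : ((x / 2) / u) ^ 2 = x ^ 2 / (4 * u ^ 2) := by
      rw [div_pow, div_pow]; norm_num; rw [div_div]
    have hAB : 2 * (s * u) * ((x / 2) / u) = x * s := by field_simp
    have expand : (s * u - (x / 2) / u) ^ 2 = b * u ^ 2 - x * s + x ^ 2 / (4 * u ^ 2) := by
      rw [sub_sq, hhalf, hAB, mul_pow, hs2]
    have hexp : -x ^ 2 / (4 * u ^ 2) + -b * u ^ 2 = -x * s + -(s * u - (x / 2) / u) ^ 2 := by
      rw [expand]; ring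
    have hmul : Real.exp (-x ^ 2 / (4 * u ^ 2)) * Real.exp (-b * u ^ 2)
        = Real.exp (-x * s) * Real.exp (-(s * u - x / 2 / u) ^ 2) := by
      rw [← Real.exp_add, ← Real.exp_add, hexp]
    simp only [smul_eq_mul, habs, hrpow]
    calc 2 * u * (u⁻¹ * Real.exp (-x ^ 2 / (4 * u ^ 2)) * Real.exp (-b * u ^ 2))
        = 2 * (u * u⁻¹) * (Real.exp (-x ^ 2 / (4 * u ^ 2)) * Real.exp (-b * u ^ 2)) := by
          ring
      _ = 2 * (Real.exp (-x * s) * Real.exp (-(s * u - x / 2 / u) ^ 2)) := by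
          rw [mul_inv_cancel₀ hne, hmul]; ring
      _ = 2 * Real.exp (-x * s) * Real.exp (-(s * u - x / 2 / u) ^ 2) := by ring
  rw [setIntegral_congr_fun hmeas hpt]
  rw [integral_const_mul, glasser_half s (x / 2) hs (by linarith)]
  rw [Real.sqrt_div pi_pos.le]
  field_simp
  ring
end

section
/- For real a > 0 and real x, ∑_{n≥1} x^n a^{n-1} (−1)^n / (n! ζ(n+1)) = a^{-1} ∑_{n≥1} (μ(n)/n)(e^{-a x / n} − 1), where ζ is the Riemann zeta function and μ the Möbius function. -/
open ArithmeticFunction Complex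

lemma tsum_pnat_eq {f : ℕ → ℂ} (hf : f 0 = 0) :
    ∑' n : ℕ+, f (n : ℕ) = ∑' n : ℕ, f n := by
  refine Function.Injective.tsum_eq (fun m n h => PNat.coe_injective h) ?_
  intro n hn
  rcases n with _ | n
  · exact absurd hf hn
  · exact ⟨⟨n + 1, n.succ_pos⟩, rfl⟩

lemma exp_sub_one_eq (z : ℂ) :
    Complex.exp z - 1 = ∑' n : ℕ+, z ^ (n : ℕ) / (Nat.factorial (n : ℕ) : ℂ) := by
  have hs : Summable (fun n : ℕ => z ^ n / (Nat.factorial n : ℂ)) :=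
    NormedSpace.expSeries_div_summable z
  have h0 : Complex.exp z = ∑' n : ℕ, z ^ n / (Nat.factorial n : ℂ) := by
    rw [Complex.exp_eq_exp_ℂ, NormedSpace.exp_eq_tsum_div]
  have h2 : ∑' n : ℕ+, z ^ (n : ℕ) / (Nat.factorial (n : ℕ) : ℂ)
      = ∑' n : ℕ, z ^ (n + 1) / (Nat.factorial (n + 1) : ℂ) := by
    rw [← Equiv.tsum_eq Equiv.pnatEquivNat.symm
      (fun n : ℕ+ => z ^ (n : ℕ) / (Nat.factorial (n : ℕ) : ℂ))]
    exact tsum_congr fun n => by simp [Nat.succPNat]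
  rw [h0, Summable.tsum_eq_zero_add hs, h2]
  simp

lemma zeta_inv_eq {s : ℂ} (hs : 1 < s.re) :
    (riemannZeta s)⁻¹ = ∑' k : ℕ+, (moebius (k : ℕ) : ℂ) / (k : ℂ) ^ s := by
  have h1 := ArithmeticFunction.LSeries_zeta_mul_Lseries_moebius hs
  rw [ArithmeticFunction.LSeries_zeta_eq_riemannZeta hs] at h1
  rw [← eq_inv_of_mul_eq_one_left (mul_comm (riemannZeta s) _ ▸ h1), LSeries]
  rw [← tsum_pnat_eq (by simp [LSeries.term])]
  refine tsum_congr fun k => ?_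
  rw [LSeries.term_of_ne_zero k.ne_zero]

theorem gram_riesz_series (a x : ℝ) (ha : 0 < a) :
    ∑' n : ℕ+, ((x : ℂ) ^ (n : ℕ) * (a : ℂ) ^ ((n : ℕ) - 1) * (-1) ^ (n : ℕ) /
        ((Nat.factorial n : ℂ) * riemannZeta ((n : ℕ) + 1))) =
      (a : ℂ)⁻¹ * ∑' n : ℕ+, ((moebius (n : ℕ) : ℂ) / (n : ℂ)) *
        (Complex.exp (-(a : ℂ) * (x : ℂ) / (n : ℂ)) - 1) := by
  have ha0 : (a : ℂ) ≠ 0 := ofReal_ne_zero.mpr ha.ne'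
  set z : ℂ := -((a : ℂ) * (x : ℂ)) with hz
  set F : ℕ+ → ℕ+ → ℂ := fun n k =>
    (moebius (k : ℕ) : ℂ) * (z / ((k : ℕ) : ℂ)) ^ (n : ℕ) /
      ((Nat.factorial (n : ℕ) : ℂ) * (a : ℂ) * ((k : ℕ) : ℂ)) with hFdef
  have hFsum : Summable (Function.uncurry F) := by
    have hg1 : Summable (fun n : ℕ+ => ‖z‖ ^ (n : ℕ) / (Nat.factorial (n : ℕ) : ℝ)) :=
      (Real.summable_pow_div_factorial ‖z‖).comp_injective
        (fun m n h => PNat.coe_injective h)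
    have hg2 : Summable (fun k : ℕ+ => a⁻¹ * (((k : ℕ) : ℝ) ^ 2)⁻¹) := by
      refine Summable.mul_left _ ?_
      have : Summable (fun k : ℕ => (((k : ℕ) : ℝ) ^ 2)⁻¹) := by
        simpa using (Real.summable_one_div_nat_pow (p := 2)).mpr le_rfl
      exact this.comp_injective (fun m n h => PNat.coe_injective h)
    refine Summable.of_norm_bounded
      (hg1.mul_of_nonneg hg2 (fun n => by positivity) (fun k => by positivity)) ?_
    rintro ⟨n, k⟩
    have hk1 : (1 : ℝ) ≤ ((k : ℕ) : ℝ) := by exact_mod_cast k.one_le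
    have hkn : ((k : ℕ) : ℝ) ≤ ((k : ℕ) : ℝ) ^ (n : ℕ) :=
      le_self_pow₀ hk1 n.pos.ne'
    have hmu : ‖((moebius (k : ℕ) : ℤ) : ℂ)‖ ≤ 1 := by
      rw [Complex.norm_intCast]
      exact_mod_cast abs_moebius_le_one
    have hnorm : ‖Function.uncurry F (n, k)‖ =
        ‖((moebius (k : ℕ) : ℤ) : ℂ)‖ * (‖z‖ ^ (n : ℕ) / ((k : ℕ) : ℝ) ^ (n : ℕ)) /
          ((Nat.factorial (n : ℕ) : ℝ) * a * ((k : ℕ) : ℝ)) := by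
      simp [Function.uncurry, hFdef, norm_div, norm_mul, norm_pow,
        Complex.norm_natCast, Complex.norm_real, abs_of_pos ha, div_pow]
    rw [hnorm]
    have hd : (0 : ℝ) < (Nat.factorial (n : ℕ) : ℝ) * a * ((k : ℕ) : ℝ) := by positivity
    calc ‖((moebius (k : ℕ) : ℤ) : ℂ)‖ * (‖z‖ ^ (n : ℕ) / ((k : ℕ) : ℝ) ^ (n : ℕ)) /
          ((Nat.factorial (n : ℕ) : ℝ) * a * ((k : ℕ) : ℝ))
        ≤ 1 * (‖z‖ ^ (n : ℕ) / ((k : ℕ) : ℝ)) /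
          ((Nat.factorial (n : ℕ) : ℝ) * a * ((k : ℕ) : ℝ)) := by
          have hkpos : (0:ℝ) < ((k : ℕ) : ℝ) := lt_of_lt_of_le one_pos hk1
          have h1 : ‖z‖ ^ (n : ℕ) / ((k : ℕ) : ℝ) ^ (n : ℕ) ≤ ‖z‖ ^ (n : ℕ) / ((k : ℕ) : ℝ) :=
            div_le_div_of_nonneg_left (by positivity) hkpos hkn
          have h2 := mul_le_mul hmu h1 (by positivity) zero_le_one
          exact div_le_div_of_nonneg_right h2 hd.le
      _ = ‖z‖ ^ (n : ℕ) / (Nat.factorial (n : ℕ) : ℝ) * (a⁻¹ * (((k : ℕ) : ℝ) ^ 2)⁻¹) := by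
          field_simp
          try ring
          try exact Or.inl trivial
  have key1 : ∀ n : ℕ+, (x : ℂ) ^ (n : ℕ) * (a : ℂ) ^ ((n : ℕ) - 1) * (-1) ^ (n : ℕ) /
      ((Nat.factorial n : ℂ) * riemannZeta ((n : ℕ) + 1)) = ∑' k : ℕ+, F n k := by
    intro n
    have hsre : 1 < ((((n : ℕ) : ℂ)) + 1).re := by
      simp only [Complex.add_re, Complex.natCast_re, Complex.one_re]
      have : (1 : ℝ) ≤ (n : ℕ) := by exact_mod_cast n.one_le
      linarith
    have hrw : (x : ℂ) ^ (n : ℕ) * (a : ℂ) ^ ((n : ℕ) - 1) * (-1) ^ (n : ℕ) /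
        ((Nat.factorial n : ℂ) * riemannZeta ((n : ℕ) + 1)) =
        ((x : ℂ) ^ (n : ℕ) * (a : ℂ) ^ ((n : ℕ) - 1) * (-1) ^ (n : ℕ) /
          (Nat.factorial n : ℂ)) * (riemannZeta (((n : ℕ) : ℂ) + 1))⁻¹ := by
      rw [div_mul_eq_div_div]
      rw [div_eq_mul_inv]
    rw [hrw, zeta_inv_eq hsre, ← tsum_mul_left]
    refine tsum_congr fun k => ?_
    have hk0 : (((k : ℕ)) : ℂ) ≠ 0 := Nat.cast_ne_zero.mpr k.ne_zero
    have hf0 : ((Nat.factorial (n : ℕ)) : ℂ) ≠ 0 :=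
      Nat.cast_ne_zero.mpr (Nat.factorial_ne_zero _)
    have hcp : (((k : ℕ) : ℂ)) ^ ((((n : ℕ)) : ℂ) + 1) = (((k : ℕ) : ℂ)) ^ ((n : ℕ) + 1) := by
      rw [show ((((n : ℕ)) : ℂ) + 1) = (((n : ℕ) + 1 : ℕ) : ℂ) by push_cast; ring,
        Complex.cpow_natCast]
    rw [hcp, hFdef]
    obtain ⟨m, hm⟩ : ∃ m, (n : ℕ) = m + 1 := ⟨(n : ℕ) - 1, (Nat.succ_pred_eq_of_pos n.pos).symm⟩
    simp only [hz, hm, Nat.add_sub_cancel]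
    have h1 : ((Nat.factorial (m + 1) : ℂ)) * (((k : ℕ) : ℂ)) ^ (m + 1 + 1) ≠ 0 :=
      mul_ne_zero (Nat.cast_ne_zero.mpr (Nat.factorial_ne_zero _)) (pow_ne_zero _ hk0)
    have h2 : (((k : ℕ) : ℂ)) ^ (m + 1) *
        ((Nat.factorial (m + 1) : ℂ) * (a : ℂ) * (((k : ℕ) : ℂ))) ≠ 0 :=
      mul_ne_zero (pow_ne_zero _ hk0)
        (mul_ne_zero (mul_ne_zero (Nat.cast_ne_zero.mpr (Nat.factorial_ne_zero _)) ha0) hk0)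
    rw [div_mul_div_comm, div_pow, mul_div_assoc', div_div, div_eq_div_iff h1 h2]
    ring
  have key2 : ∀ k : ℕ+, ∑' n : ℕ+, F n k =
      (a : ℂ)⁻¹ * (((moebius (k : ℕ) : ℂ) / ((k : ℕ) : ℂ)) *
        (Complex.exp (-(a : ℂ) * (x : ℂ) / ((k : ℕ) : ℂ)) - 1)) := by
    intro k
    have hk0 : (((k : ℕ)) : ℂ) ≠ 0 := Nat.cast_ne_zero.mpr k.ne_zero
    have harg : -(a : ℂ) * (x : ℂ) / ((k : ℕ) : ℂ) = z / ((k : ℕ) : ℂ) := by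
      rw [hz]; ring
    rw [harg, exp_sub_one_eq, ← tsum_mul_left, ← tsum_mul_left]
    refine tsum_congr fun n => ?_
    rw [hFdef]
    have hf0 : ((Nat.factorial (n : ℕ)) : ℂ) ≠ 0 :=
      Nat.cast_ne_zero.mpr (Nat.factorial_ne_zero _)
    field_simp
    try ring
    try exact Or.inl trivial
  calc ∑' n : ℕ+, ((x : ℂ) ^ (n : ℕ) * (a : ℂ) ^ ((n : ℕ) - 1) * (-1) ^ (n : ℕ) /
        ((Nat.factorial n : ℂ) * riemannZeta ((n : ℕ) + 1)))
      = ∑' n : ℕ+, ∑' k : ℕ+, F n k := tsum_congr key1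
    _ = ∑' k : ℕ+, ∑' n : ℕ+, F n k := (Summable.tsum_comm hFsum).symm
    _ = ∑' k : ℕ+, (a : ℂ)⁻¹ * (((moebius (k : ℕ) : ℂ) / ((k : ℕ) : ℂ)) *
        (Complex.exp (-(a : ℂ) * (x : ℂ) / ((k : ℕ) : ℂ)) - 1)) := tsum_congr key2
    _ = (a : ℂ)⁻¹ * ∑' k : ℕ+, (((moebius (k : ℕ) : ℂ) / ((k : ℕ) : ℂ)) *
        (Complex.exp (-(a : ℂ) * (x : ℂ) / ((k : ℕ) : ℂ)) - 1)) := tsum_mul_left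
end

section
/- For real α > 0 and real y, ∫_0^∞ e^{-α x²} sin(y x) dx = (y / (2α)) · ₁F₁(1; 3/2; −y²/(4α)). -/
open MeasureTheory Real

private lemma poch_half (n : ℕ) :
    (∏ i ∈ Finset.range n, ((3 : ℝ) / 2 + i)) * (4 ^ n * (n.factorial : ℝ)) =
      ((2 * n + 1).factorial : ℝ) := by
  induction n with
  | zero => simp
  | succ n ih =>
    rw [Finset.prod_range_succ]
    have h : 2 * (n + 1) + 1 = (2 * n + 1 + 1) + 1 := by ring
    rw [h, Nat.factorial_succ, Nat.factorial_succ, Nat.factorial_succ]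
    push_cast
    push_cast at ih
    linear_combination (4 * ((n : ℝ) + 1) * ((3 : ℝ) / 2 + n)) * ih

private lemma key_integral {α : ℝ} (hα : 0 < α) (n : ℕ) :
    ∫ x in Set.Ioi (0 : ℝ), x ^ (2 * n + 1) * Real.exp (-α * x ^ 2) =
      (n.factorial : ℝ) / (2 * α ^ (n + 1)) := by
  have hq : (-1 : ℝ) < ((2 * n + 1 : ℕ) : ℝ) :=
    lt_of_lt_of_le (by norm_num) (Nat.cast_nonneg _)
  have h := integral_rpow_mul_exp_neg_mul_rpow (p := 2) (q := ((2 * n + 1 : ℕ) : ℝ))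
    (by norm_num) hq hα
  have h1 : ∀ x : ℝ, x ^ (((2 * n + 1 : ℕ) : ℝ)) = x ^ (2 * n + 1) := fun x =>
    Real.rpow_natCast x _
  have h2 : ∀ x : ℝ, x ^ ((2 : ℝ)) = x ^ 2 := fun x => by
    rw [show (2 : ℝ) = ((2 : ℕ) : ℝ) by norm_num, Real.rpow_natCast]
  simp_rw [h1, h2] at h
  rw [h]
  have h3 : (-(((2 * n + 1 : ℕ) : ℝ) + 1) / 2) = -((n : ℝ) + 1) := by push_cast; ring
  have h4 : ((((2 * n + 1 : ℕ) : ℝ)) + 1) / 2 = (n : ℝ) + 1 := by push_cast; ring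
  rw [h3, h4, Real.Gamma_nat_eq_factorial,
    show -((n : ℝ) + 1) = -(((n + 1 : ℕ) : ℝ)) by push_cast; ring,
    Real.rpow_neg hα.le, Real.rpow_natCast]
  have hαn : (α : ℝ) ^ (n + 1) ≠ 0 := by positivity
  field_simp

theorem gaussian_sine_transform (α y : ℝ) (hα : 0 < α) :
    ∫ x in Set.Ioi (0 : ℝ), Real.exp (-α * x ^ 2) * Real.sin (y * x) =
      y / (2 * α) * ∑' n : ℕ,
        ((∏ i ∈ Finset.range n, ((1 : ℝ) + i)) / (∏ i ∈ Finset.range n, ((3 : ℝ) / 2 + i))) *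
          (-y ^ 2 / (4 * α)) ^ n / (Nat.factorial n : ℝ) := by
  set F : ℕ → ℝ → ℝ := fun n x =>
    ((-1) ^ n * y ^ (2 * n + 1) / ((2 * n + 1).factorial : ℝ)) *
      (x ^ (2 * n + 1) * Real.exp (-α * x ^ 2)) with hF
  have hbase : ∀ n : ℕ, IntegrableOn
      (fun x : ℝ => x ^ (2 * n + 1) * Real.exp (-α * x ^ 2)) (Set.Ioi 0) := by
    intro n
    have hq : (-1 : ℝ) < ((2 * n + 1 : ℕ) : ℝ) :=
      lt_of_lt_of_le (by norm_num) (Nat.cast_nonneg _)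
    have := integrableOn_rpow_mul_exp_neg_mul_sq hα (s := ((2 * n + 1 : ℕ) : ℝ)) hq
    simpa only [Real.rpow_natCast] using this
  have hF_int : ∀ n : ℕ, Integrable (F n)
      (volume.restrict (Set.Ioi (0 : ℝ))) := fun n => (hbase n).const_mul _
  -- value of each integral
  have hF_val : ∀ n : ℕ, ∫ x in Set.Ioi (0 : ℝ), F n x =
      ((-1) ^ n * y ^ (2 * n + 1) / ((2 * n + 1).factorial : ℝ)) *
        ((n.factorial : ℝ) / (2 * α ^ (n + 1))) := by
    intro n
    rw [hF]
    rw [integral_const_mul, key_integral hα n]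
  -- value of the integral of the norm
  have hnorm_val : ∀ n : ℕ, ∫ x in Set.Ioi (0 : ℝ), ‖F n x‖ =
      (|y| ^ (2 * n + 1) / ((2 * n + 1).factorial : ℝ)) *
        ((n.factorial : ℝ) / (2 * α ^ (n + 1))) := by
    intro n
    rw [← key_integral hα n, ← integral_const_mul]
    refine setIntegral_congr_fun measurableSet_Ioi (fun x hx => ?_)
    have hx0 : (0 : ℝ) < x := hx
    have hs : (0 : ℝ) ≤ x ^ (2 * n + 1) * Real.exp (-α * x ^ 2) := by positivity
    rw [hF, Real.norm_eq_abs, abs_mul, abs_of_nonneg hs]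
    congr 1
    rw [abs_div, abs_mul, abs_pow, abs_pow, abs_neg, abs_one, one_pow, one_mul, Nat.abs_cast]
  have hF_sum : Summable fun n : ℕ => ∫ x in Set.Ioi (0 : ℝ), ‖F n x‖ := by
    rw [show (fun n : ℕ => ∫ x in Set.Ioi (0 : ℝ), ‖F n x‖) =
        fun n => (|y| ^ (2 * n + 1) / ((2 * n + 1).factorial : ℝ)) *
          ((n.factorial : ℝ) / (2 * α ^ (n + 1))) from funext hnorm_val]
    have hsummable : Summable fun n : ℕ =>
        (|y| / (2 * α)) * ((y ^ 2 / α) ^ n / (n.factorial : ℝ)) :=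
      (Real.summable_pow_div_factorial (y ^ 2 / α)).mul_left _
    refine Summable.of_nonneg_of_le (fun n => by positivity) (fun n => ?_) hsummable
    have hfac : (n.factorial : ℝ) * (n.factorial : ℝ) ≤ ((2 * n + 1).factorial : ℝ) := by
      have : n.factorial * n.factorial ≤ (2 * n + 1).factorial :=
        le_trans (Nat.le_of_dvd (Nat.factorial_pos _)
          (by simpa [two_mul] using Nat.factorial_mul_factorial_dvd_factorial_add n n))
          (Nat.factorial_le (by omega))
      exact_mod_cast this
    have h1 : |y| ^ (2 * n + 1) = |y| * (y ^ 2) ^ n := by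
      rw [pow_succ, pow_mul, sq_abs, mul_comm]
    have hA : (0 : ℝ) ≤ |y| * (y ^ 2) ^ n := by positivity
    have hfn : (0 : ℝ) < (n.factorial : ℝ) := by positivity
    have hf2 : (0 : ℝ) < ((2 * n + 1).factorial : ℝ) := by positivity
    calc |y| ^ (2 * n + 1) / ((2 * n + 1).factorial : ℝ) * ((n.factorial : ℝ) / (2 * α ^ (n + 1)))
        = (|y| * (y ^ 2) ^ n) *
            ((n.factorial : ℝ) / (((2 * n + 1).factorial : ℝ) * (2 * α ^ (n + 1)))) := by
          rw [h1]; ring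
      _ ≤ (|y| * (y ^ 2) ^ n) * (1 / ((n.factorial : ℝ) * (2 * α ^ (n + 1)))) := by
          refine mul_le_mul_of_nonneg_left ?_ hA
          rw [div_le_div_iff₀ (by positivity) (by positivity)]
          have h2α : (0 : ℝ) ≤ 2 * α ^ (n + 1) := by positivity
          nlinarith [mul_le_mul_of_nonneg_right hfac h2α]
      _ = |y| / (2 * α) * ((y ^ 2 / α) ^ n / (n.factorial : ℝ)) := by
          rw [div_pow]
          field_simp
          ring
  have hsum := hasSum_integral_of_summable_integral_norm hF_int hF_sum
  -- identify the pointwise tsum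
  have hpt : ∀ x : ℝ, ∑' n : ℕ, F n x = Real.exp (-α * x ^ 2) * Real.sin (y * x) := by
    intro x
    have h := (Real.hasSum_sin (y * x)).mul_left (Real.exp (-α * x ^ 2))
    have heq : ∀ n : ℕ, F n x = Real.exp (-α * x ^ 2) *
        ((-1) ^ n * (y * x) ^ (2 * n + 1) / ((2 * n + 1).factorial : ℝ)) := by
      intro n
      rw [hF]
      simp only [mul_pow]
      ring
    rw [← (h.congr_fun heq).tsum_eq]
  -- rewrite RHS
  have hRHS : y / (2 * α) * ∑' n : ℕ,
        ((∏ i ∈ Finset.range n, ((1 : ℝ) + i)) / (∏ i ∈ Finset.range n, ((3 : ℝ) / 2 + i))) *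
          (-y ^ 2 / (4 * α)) ^ n / (Nat.factorial n : ℝ) =
      ∑' n : ℕ, ((-1) ^ n * y ^ (2 * n + 1) / ((2 * n + 1).factorial : ℝ)) *
        ((n.factorial : ℝ) / (2 * α ^ (n + 1))) := by
    rw [← tsum_mul_left]
    refine tsum_congr fun n => ?_
    have hnum : (∏ i ∈ Finset.range n, ((1 : ℝ) + i)) = (n.factorial : ℝ) := by
      rw [show (fun i : ℕ => (1 : ℝ) + i) = fun i : ℕ => ((i + 1 : ℕ) : ℝ) from
        funext fun i => by push_cast; ring]
      rw [← Nat.cast_prod, Finset.prod_range_add_one_eq_factorial]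
    have hP := poch_half n
    set P := ∏ i ∈ Finset.range n, ((3 : ℝ) / 2 + i) with hPdef
    have hPpos : 0 < P := Finset.prod_pos fun i _ => by positivity
    have hf2 : (0 : ℝ) < ((2 * n + 1).factorial : ℝ) := by positivity
    have hfn : (0 : ℝ) < (n.factorial : ℝ) := by positivity
    have hPval : P = ((2 * n + 1).factorial : ℝ) / (4 ^ n * (n.factorial : ℝ)) := by
      rw [eq_div_iff (by positivity)]
      exact hP
    have hpow : (-y ^ 2 / (4 * α)) ^ n = (-1) ^ n * y ^ (2 * n) / (4 ^ n * α ^ n) := by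
      rw [div_pow, mul_pow, neg_pow, ← pow_mul]
    rw [hnum, hPval, hpow]
    have h4n : ((4 : ℝ) ^ n) ≠ 0 := by positivity
    have hαn : (α : ℝ) ^ n ≠ 0 := by positivity
    field_simp
    ring
  rw [hRHS]
  rw [show (∫ x in Set.Ioi (0:ℝ), Real.exp (-α * x ^ 2) * Real.sin (y * x)) =
      ∫ x in Set.Ioi (0:ℝ), ∑' n, F n x from (congrArg _ (funext hpt)).symm]
  rw [← hsum.tsum_eq]
  exact tsum_congr hF_val
end
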